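/- arXiv:0806.0914 — 2 statements merged into one kernel-verified Lean document; each statement's English description precedes it below -/
import Mathlib

section
/- Description of the solutions at 0 in the periodic case. Let 0 ≤ α < 1 < β, k := ⌈α+β⌉, A := {0,…,k−1}, γ := α+β−k+1. Suppose u^{α,β} is periodic with minimal period p > 1, and let a := (u^{α,β}₀,…,u^{α,β}_{p−1}) be its period block (then u^{α,β}_{p−1} ≥ 1). Let u ∈ A^ℕ satisfy φ̄_∞^{α,β}(u) = 0 and φ̄_∞^{α,β}(σu) = α, and suppose there exists w ∈ A^ℕ such that for all n ≥ 0: u ≼ σⁿu ≼ w, φ̄_∞^{α,β}(w) = 1 and φ̄_∞^{α,β}(σw) ≤ γ. Then a′⌢v^{α,β} ≼ u ≼ u^{α,β}, where a′ := a₀⋯a_{p−2}(a_{p−1}−1) and ⌢ denotes concatenation of a finite word with a string. Moreover, the following are equivalent: u = u^{α,β}; a is a prefix of u; φ̄_∞^{α,β}(σᵖu) < 1. -/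
open Filter Set

/-- The shift map on one-sided sequences. -/
def shft (x : ℕ → ℕ) : ℕ → ℕ := fun n => x (n + 1)

/-- Strict lexicographic order on one-sided sequences:
`x ≺ y` iff they differ and `x m < y m` at the first index `m` where they differ. -/
def lexLt (x y : ℕ → ℕ) : Prop := ∃ m, (∀ i, i < m → x i = y i) ∧ x m < y m

/-- Lexicographic order `x ≼ y` on one-sided sequences. -/
def lexLe (x y : ℕ → ℕ) : Prop := x = y ∨ lexLt x y

/-- The map `φ̄^{α,β} : ℝ → [0,1]`:  `0` for `t ≤ α`, `(t-α)/β` for `α ≤ t ≤ α+β`,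
`1` for `t ≥ α+β`. -/
noncomputable def phiB (α β t : ℝ) : ℝ :=
  if t ≤ α then 0 else if α + β ≤ t then 1 else (t - α) / β

/-- `φ̄ₙ^{α,β}(x) = φ̄^{α,β}(x₀ + φ̄^{α,β}(x₁ + ⋯ + φ̄^{α,β}(x_{n-1})⋯))`. -/
noncomputable def phiBN (α β : ℝ) : ℕ → (ℕ → ℕ) → ℝ
  | 0, _ => 0
  | n + 1, x => phiB α β (x 0 + phiBN α β n (shft x))

/-- `φ̄_∞^{α,β}(x) = limₙ φ̄ₙ^{α,β}(x)`; the sequence `φ̄ₙ^{α,β}(x)` is nondecreasing in `n`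
and bounded, so its limit is its supremum. -/
noncomputable def phiBInf (α β : ℝ) (x : ℕ → ℕ) : ℝ := ⨆ n, phiBN α β n x

/-- `T̂_{α,β}(x) = βx + α − ⌊βx + α⌋`. -/
noncomputable def Tlow (α β x : ℝ) : ℝ := β * x + α - ⌊β * x + α⌋

/-- `Ť_{α,β}(x) = βx + α + 1 − ⌈βx + α⌉`. -/
noncomputable def Thigh (α β x : ℝ) : ℝ := β * x + α + 1 - ⌈β * x + α⌉

/-- `k = ⌈α + β⌉`, the size of the alphabet `A = {0, …, k-1}`. -/
noncomputable def kAB (α β : ℝ) : ℕ := (⌈α + β⌉).toNat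

/-- The string `u^{α,β}`, the coding of the orbit of `0`:
`u^{α,β}ₙ = ⌊β T̂ⁿ_{α,β}(0) + α⌋`. -/
noncomputable def uItin (α β : ℝ) : ℕ → ℕ := fun n => (⌊β * (Tlow α β)^[n] 0 + α⌋).toNat

/-- The string `v^{α,β}`, the coding of the orbit of `1`:
`v^{α,β}ₙ = ⌈β Ťⁿ_{α,β}(1) + α⌉ − 1`. -/
noncomputable def vItin (α β : ℝ) : ℕ → ℕ := fun n => (⌈β * (Thigh α β)^[n] 1 + α⌉ - 1).toNat

/-- The shift space `Σ(u,v) = {x ∈ A^ℕ : u ≼ σⁿx ≼ v for all n ≥ 0}`, `A = {0,…,k-1}`. -/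
def SigSet (k : ℕ) (u v : ℕ → ℕ) : Set (ℕ → ℕ) :=
  {x | (∀ i, x i < k) ∧ ∀ n, lexLe u (shft^[n] x) ∧ lexLe (shft^[n] x) v}

/-- The number of words of length `n` in the language of `Σ(u,v)` (prefixes of elements). -/
noncomputable def nWords (k : ℕ) (u v : ℕ → ℕ) (n : ℕ) : ℕ :=
  Nat.card {w : Fin n → ℕ // ∃ x ∈ SigSet k u v, ∀ i : Fin n, x i.1 = w i}

/-- The topological entropy (base 2) of `Σ(u,v)`:
`h = limₙ (1/n) log₂ card(Lₙ)` (the limit exists by subadditivity, so it equals the limsup;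
it is `0` when `Σ(u,v) = ∅`). -/
noncomputable def entS (k : ℕ) (u v : ℕ → ℕ) : ℝ :=
  Filter.limsup (fun n : ℕ => Real.logb 2 (nWords k u v n) / (n : ℝ)) Filter.atTop

/-- Concatenation of the word `w₀ ⋯ w_{p-1}` (the first `p` letters of `w`) with the
string `y`. -/
def wcat (p : ℕ) (w y : ℕ → ℕ) : ℕ → ℕ := fun n => if n < p then w n else y (n - p)

section Aux

variable {α β : ℝ}

lemma shft_iter (x : ℕ → ℕ) (k n : ℕ) : shft^[k] x n = x (n + k) := by
  induction k generalizing x n with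
  | zero => rfl
  | succ k ih =>
      rw [Function.iterate_succ_apply, ih]
      exact congrArg x (by omega)

lemma shft_shft_iter (x : ℕ → ℕ) (k : ℕ) : shft (shft^[k] x) = shft^[k+1] x := by
  funext n
  show (shft^[k] x) (n+1) = _
  rw [shft_iter, shft_iter]
  exact congrArg x (by omega)

lemma lexLt_asymm {x y : ℕ → ℕ} (h1 : lexLt x y) (h2 : lexLt y x) : False := by
  obtain ⟨m1, ha1, hb1⟩ := h1
  obtain ⟨m2, ha2, hb2⟩ := h2
  rcases lt_trichotomy m1 m2 with h | h | h
  · exact absurd (ha2 m1 h) (by omega)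
  · subst h; omega
  · exact absurd (ha1 m2 h) (by omega)

lemma phiB_eq (hβ : 0 < β) (t : ℝ) :
    phiB α β t = max 0 (min 1 ((t - α) / β)) := by
  unfold phiB
  split_ifs with h1 h2
  · have h : (t - α) / β ≤ 0 := div_nonpos_of_nonpos_of_nonneg (by linarith) hβ.le
    rw [min_eq_right (h.trans zero_le_one), max_eq_left h]
  · have h : 1 ≤ (t - α) / β := (one_le_div hβ).mpr (by linarith)
    rw [min_eq_left h, max_eq_right zero_le_one]
  · have h0 : 0 ≤ (t - α) / β := div_nonneg (by linarith) hβ.le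
    have h1' : (t - α) / β ≤ 1 := (div_le_one hβ).mpr (by linarith)
    rw [min_eq_right h1', max_eq_right h0]

lemma phiB_nonneg (hβ : 0 < β) (t : ℝ) : 0 ≤ phiB α β t := by
  rw [phiB_eq hβ]; exact le_max_left _ _

lemma phiB_le_one (hβ : 0 < β) (t : ℝ) : phiB α β t ≤ 1 := by
  rw [phiB_eq hβ]
  exact max_le zero_le_one (min_le_left _ _)

lemma phiB_mono (hβ : 0 < β) : Monotone (phiB α β) := by
  intro a b h
  rw [phiB_eq hβ, phiB_eq hβ]
  gcongr

lemma phiB_continuous (hβ : 0 < β) : Continuous (phiB α β) := by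
  have : phiB α β = fun t => max 0 (min 1 ((t - α) / β)) := funext (phiB_eq hβ)
  rw [this]
  fun_prop

lemma phiB_lt_left (hβ : 0 < β) {a b : ℝ} (hb1 : α ≤ b) (hb2 : b < α + β)
    (hab : b < a) : phiB α β b < phiB α β a := by
  have hrb0 : 0 ≤ (b - α) / β := div_nonneg (by linarith) hβ.le
  have hrb1 : (b - α) / β < 1 := (div_lt_one hβ).mpr (by linarith)
  have hlt : (b - α) / β < (a - α) / β := by gcongr
  rw [phiB_eq hβ, phiB_eq hβ, min_eq_right hrb1.le, max_eq_right hrb0]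
  calc (b - α) / β < min 1 ((a - α) / β) := lt_min hrb1 hlt
    _ ≤ max 0 (min 1 ((a - α) / β)) := le_max_right _ _

lemma phiB_lt_right (hβ : 0 < β) {a b : ℝ} (ha1 : α < a) (ha2 : a ≤ α + β)
    (hab : b < a) : phiB α β b < phiB α β a := by
  have hra0 : 0 < (a - α) / β := div_pos (by linarith) hβ
  have hra1 : (a - α) / β ≤ 1 := (div_le_one hβ).mpr (by linarith)
  have hlt : (b - α) / β < (a - α) / β := by gcongr
  have hm2 : 0 < min 1 ((a - α) / β) := lt_min one_pos hra0
  have h2 : min 1 ((b - α) / β) < min 1 ((a - α) / β) :=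
    lt_min ((min_le_right _ _).trans_lt (hlt.trans_le hra1)) ((min_le_right _ _).trans_lt hlt)
  rw [phiB_eq hβ, phiB_eq hβ, max_eq_right hm2.le]
  exact max_lt hm2 h2

lemma phiB_eq_zero (hβ : 0 < β) {t : ℝ} (h : phiB α β t = 0) : t ≤ α := by
  by_contra hc
  push_neg at hc
  have : (0:ℝ) < phiB α β t := by
    rw [phiB_eq hβ]
    have : 0 < min 1 ((t - α) / β) := lt_min one_pos (div_pos (by linarith) hβ)
    exact this.trans_le (le_max_right _ _)
  linarith [this, h.le]

lemma phiBN_nonneg (hβ : 0 < β) : ∀ (n : ℕ) (x : ℕ → ℕ), 0 ≤ phiBN α β n x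
  | 0, _ => le_refl 0
  | n+1, x => phiB_nonneg hβ _

lemma phiBN_le_one (hβ : 0 < β) : ∀ (n : ℕ) (x : ℕ → ℕ), phiBN α β n x ≤ 1
  | 0, _ => zero_le_one
  | n+1, x => phiB_le_one hβ _

lemma phiBN_succ_mono (hβ : 0 < β) : ∀ (n : ℕ) (x : ℕ → ℕ),
    phiBN α β n x ≤ phiBN α β (n+1) x
  | 0, x => phiBN_nonneg hβ 1 x
  | n+1, x => phiB_mono hβ (by
      have := phiBN_succ_mono hβ n (shft x)
      simp only [add_le_add_iff_left]
      exact this)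

lemma phiBN_lex_mono (hβ : 0 < β) : ∀ (n : ℕ) {x y : ℕ → ℕ}, lexLe x y →
    phiBN α β n x ≤ phiBN α β n y
  | 0, _, _, _ => le_refl 0
  | n+1, x, y, h => by
      rcases h with h | ⟨m, ha, hb⟩
      · subst h; exact le_refl _
      · rcases Nat.eq_zero_or_pos m with rfl | hm
        · apply phiB_mono hβ
          have h1 : phiBN α β n (shft x) ≤ 1 := phiBN_le_one hβ n _
          have h2 : 0 ≤ phiBN α β n (shft y) := phiBN_nonneg hβ n _
          have h3 : (x 0 : ℝ) + 1 ≤ (y 0 : ℝ) := by exact_mod_cast hb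
          linarith
        · have h0 : x 0 = y 0 := ha 0 hm
          have hsh : lexLe (shft x) (shft y) := by
            right
            refine ⟨m - 1, fun i hi => ha (i+1) (by omega), ?_⟩
            show x (m - 1 + 1) < y (m - 1 + 1)
            have : m - 1 + 1 = m := by omega
            rw [this]; exact hb
          apply phiB_mono hβ
          have := phiBN_lex_mono hβ n hsh
          rw [h0]
          linarith

lemma phiBInf_bdd (x : ℕ → ℕ) (hβ : 0 < β) :
    BddAbove (Set.range fun n => phiBN α β n x) := by
  refine ⟨1, ?_⟩
  rintro _ ⟨n, rfl⟩
  exact phiBN_le_one hβ n x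

lemma phiBN_le_phiBInf (hβ : 0 < β) (x : ℕ → ℕ) (n : ℕ) :
    phiBN α β n x ≤ phiBInf α β x :=
  le_ciSup (phiBInf_bdd x hβ) n

lemma phiBInf_nonneg (hβ : 0 < β) (x : ℕ → ℕ) : 0 ≤ phiBInf α β x :=
  (phiBN_nonneg hβ 0 x).trans (phiBN_le_phiBInf hβ x 0)

lemma phiBInf_le_one (hβ : 0 < β) (x : ℕ → ℕ) : phiBInf α β x ≤ 1 :=
  ciSup_le fun n => phiBN_le_one hβ n x

lemma phiBInf_mono (hβ : 0 < β) {x y : ℕ → ℕ} (h : lexLe x y) :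
    phiBInf α β x ≤ phiBInf α β y :=
  ciSup_le fun n => (phiBN_lex_mono hβ n h).trans (phiBN_le_phiBInf hβ y n)

lemma phiBInf_rec (hβ : 0 < β) (x : ℕ → ℕ) :
    phiBInf α β x = phiB α β (x 0 + phiBInf α β (shft x)) := by
  have hb : BddAbove (Set.range fun n => phiBN α β n (shft x)) := phiBInf_bdd _ hβ
  have hm : Monotone fun s : ℝ => phiB α β (x 0 + s) :=
    fun a b h => phiB_mono hβ (by linarith)
  have hc : ContinuousAt (fun s : ℝ => phiB α β (x 0 + s))
      (⨆ n, phiBN α β n (shft x)) :=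
    ((phiB_continuous hβ).comp (continuous_const.add continuous_id)).continuousAt
  have key := hm.map_ciSup_of_continuousAt hc hb
  have hb2 : BddAbove (Set.range fun n => phiBN α β n x) := phiBInf_bdd _ hβ
  have heq : ∀ n : ℕ, phiB α β (x 0 + phiBN α β n (shft x)) = phiBN α β (n+1) x :=
    fun n => rfl
  have hb3 : BddAbove (Set.range fun n => phiB α β (x 0 + phiBN α β n (shft x))) := by
    refine ⟨1, ?_⟩
    rintro _ ⟨n, rfl⟩
    exact phiB_le_one hβ _
  have : (⨆ n, phiB α β (x 0 + phiBN α β n (shft x))) = ⨆ n, phiBN α β n x := by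
    apply le_antisymm
    · apply ciSup_le
      intro n
      rw [heq n]
      exact le_ciSup hb2 (n+1)
    · apply ciSup_le
      intro n
      calc phiBN α β n x ≤ phiBN α β (n+1) x := phiBN_succ_mono hβ n x
        _ = phiB α β (x 0 + phiBN α β n (shft x)) := (heq n).symm
        _ ≤ _ := le_ciSup hb3 n
  show (⨆ n, phiBN α β n x) = _
  rw [← this, ← key]
  rfl

lemma phiBInf_rec_iter (hβ : 0 < β) (s : ℕ → ℕ) (i : ℕ) :
    phiBInf α β (shft^[i] s) = phiB α β (s i + phiBInf α β (shft^[i+1] s)) := by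
  rw [phiBInf_rec hβ, shft_shft_iter, shft_iter, Nat.zero_add]

end Aux
section Orbit

variable {α β : ℝ}

noncomputable def xorb (α β : ℝ) (n : ℕ) : ℝ := (Tlow α β)^[n] 0

noncomputable def yorb (α β : ℝ) (n : ℕ) : ℝ := (Thigh α β)^[n] 1

lemma xorb_zero : xorb α β 0 = 0 := rfl

lemma yorb_zero : yorb α β 0 = 1 := rfl

lemma xorb_succ (n : ℕ) : xorb α β (n+1) = Tlow α β (xorb α β n) :=
  Function.iterate_succ_apply' _ _ _

lemma yorb_succ (n : ℕ) : yorb α β (n+1) = Thigh α β (yorb α β n) :=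
  Function.iterate_succ_apply' _ _ _

lemma xorb_mem (n : ℕ) : 0 ≤ xorb α β n ∧ xorb α β n < 1 := by
  cases n with
  | zero => exact ⟨le_refl 0, zero_lt_one⟩
  | succ n =>
      rw [xorb_succ]
      unfold Tlow
      constructor
      · have := Int.floor_le (β * xorb α β n + α)
        linarith
      · have := Int.lt_floor_add_one (β * xorb α β n + α)
        push_cast at this ⊢
        linarith

lemma yorb_mem (n : ℕ) : 0 < yorb α β n ∧ yorb α β n ≤ 1 := by
  cases n with
  | zero => exact ⟨zero_lt_one, le_refl 1⟩
  | succ n =>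
      rw [yorb_succ]
      unfold Thigh
      constructor
      · have := Int.ceil_lt_add_one (β * yorb α β n + α)
        linarith
      · have := Int.le_ceil (β * yorb α β n + α)
        linarith

lemma uItin_cast (hα0 : 0 ≤ α) (hβ : 0 < β) (n : ℕ) :
    (uItin α β n : ℝ) = (⌊β * xorb α β n + α⌋ : ℤ) := by
  have h0 : (0:ℤ) ≤ ⌊β * xorb α β n + α⌋ := by
    apply Int.floor_nonneg.mpr
    have := (xorb_mem (α := α) (β := β) n).1
    nlinarith
  unfold uItin
  rw [show (Tlow α β)^[n] 0 = xorb α β n from rfl]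
  exact_mod_cast congrArg (Int.cast : ℤ → ℝ) (Int.toNat_of_nonneg h0)

lemma uItin_bounds (hα0 : 0 ≤ α) (hβ : 0 < β) (n : ℕ) :
    (uItin α β n : ℝ) ≤ β * xorb α β n + α ∧
      β * xorb α β n + α < uItin α β n + 1 := by
  rw [uItin_cast hα0 hβ]
  exact ⟨Int.floor_le _, Int.lt_floor_add_one _⟩

lemma xorb_step (hα0 : 0 ≤ α) (hβ : 0 < β) (n : ℕ) :
    xorb α β (n+1) = β * xorb α β n + α - uItin α β n := by
  rw [xorb_succ, uItin_cast hα0 hβ]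
  rfl

lemma xphiB (hα0 : 0 ≤ α) (hβ : 0 < β) (n : ℕ) :
    phiB α β (uItin α β n + xorb α β (n+1)) = xorb α β n := by
  have hstep := xorb_step hα0 hβ n
  have harg : (uItin α β n : ℝ) + xorb α β (n+1) = β * xorb α β n + α := by
    rw [hstep]; ring
  rw [harg]
  have hx0 := (xorb_mem (α := α) (β := β) n).1
  have hx1 := (xorb_mem (α := α) (β := β) n).2
  unfold phiB
  split_ifs with h1 h2
  · nlinarith
  · nlinarith
  · field_simp
    ring

lemma vItin_cast (hα0 : 0 ≤ α) (hβ : 0 < β) (n : ℕ) :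
    (vItin α β n : ℝ) = (⌈β * yorb α β n + α⌉ : ℤ) - 1 := by
  have hpos : (0:ℝ) < β * yorb α β n + α := by
    have := (yorb_mem (α := α) (β := β) n).1
    nlinarith
  have h1 : (1:ℤ) ≤ ⌈β * yorb α β n + α⌉ := Int.ceil_pos.mpr hpos
  unfold vItin
  rw [show (Thigh α β)^[n] 1 = yorb α β n from rfl]
  have : (0:ℤ) ≤ ⌈β * yorb α β n + α⌉ - 1 := by omega
  have := congrArg (Int.cast : ℤ → ℝ) (Int.toNat_of_nonneg this)
  push_cast at this ⊢
  linarith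

lemma vItin_bounds (hα0 : 0 ≤ α) (hβ : 0 < β) (n : ℕ) :
    (vItin α β n : ℝ) < β * yorb α β n + α ∧
      β * yorb α β n + α ≤ vItin α β n + 1 := by
  rw [vItin_cast hα0 hβ]
  constructor
  · have := Int.ceil_lt_add_one (β * yorb α β n + α)
    linarith
  · have := Int.le_ceil (β * yorb α β n + α)
    linarith

lemma yorb_step (hα0 : 0 ≤ α) (hβ : 0 < β) (n : ℕ) :
    yorb α β (n+1) = β * yorb α β n + α - vItin α β n := by
  rw [yorb_succ, vItin_cast hα0 hβ]
  unfold Thigh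
  ring

lemma yphiB (hα0 : 0 ≤ α) (hβ : 0 < β) (n : ℕ) :
    phiB α β (vItin α β n + yorb α β (n+1)) = yorb α β n := by
  have hstep := yorb_step hα0 hβ n
  have harg : (vItin α β n : ℝ) + yorb α β (n+1) = β * yorb α β n + α := by
    rw [hstep]; ring
  rw [harg]
  have hy0 := (yorb_mem (α := α) (β := β) n).1
  have hy1 := (yorb_mem (α := α) (β := β) n).2
  unfold phiB
  split_ifs with h1 h2
  · nlinarith
  · nlinarith
  · field_simp
    ring

lemma xorb_one (hα0 : 0 ≤ α) (hα1 : α < 1) : xorb α β 1 = α := by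
  rw [xorb_succ, xorb_zero]
  unfold Tlow
  rw [mul_zero, zero_add, Int.floor_eq_zero_iff.mpr ⟨hα0, hα1⟩]
  simp

lemma uItin_zero (hα0 : 0 ≤ α) (hα1 : α < 1) (hβ : 0 < β) : uItin α β 0 = 0 := by
  have := uItin_cast (α := α) (β := β) hα0 hβ 0
  rw [xorb_zero, mul_zero, zero_add, Int.floor_eq_zero_iff.mpr ⟨hα0, hα1⟩] at this
  exact_mod_cast this

lemma xorb_shift_zero (hα0 : 0 ≤ α) (hβ : 0 < β) (m : ℕ) (h : xorb α β m = 0) :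
    ∀ n, xorb α β (m + n) = xorb α β n := by
  intro n
  induction n with
  | zero => rw [Nat.add_zero, h, xorb_zero]
  | succ n ih => rw [← Nat.add_assoc, xorb_succ, xorb_succ, ih]

lemma shift_eq_of_xorb_zero (hα0 : 0 ≤ α) (hβ : 0 < β) (m : ℕ) (h : xorb α β m = 0) :
    shft^[m] (uItin α β) = uItin α β := by
  funext n
  rw [shft_iter]
  have hx : xorb α β (n + m) = xorb α β n := by
    rw [Nat.add_comm]; exact xorb_shift_zero hα0 hβ m h n
  have h1 := uItin_cast (α := α) (β := β) hα0 hβ (n + m)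
  have h2 := uItin_cast (α := α) (β := β) hα0 hβ n
  rw [hx] at h1
  have : (uItin α β (n + m) : ℝ) = uItin α β n := by rw [h1, h2]
  exact_mod_cast this

end Orbit
section Periodic

variable {α β : ℝ} {p : ℕ}

lemma uItin_per (hper : shft^[p] (uItin α β) = uItin α β) (n : ℕ) :
    uItin α β (n + p) = uItin α β n := by
  conv_rhs => rw [← hper]
  rw [shft_iter]

lemma xorb_p_zero (hα0 : 0 ≤ α) (hβ : 1 < β)
    (hper : shft^[p] (uItin α β) = uItin α β) : xorb α β p = 0 := by
  have hβ0 : (0:ℝ) < β := by linarith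
  have key : ∀ n, xorb α β (p + n) - xorb α β n = β ^ n * xorb α β p := by
    intro n
    induction n with
    | zero => rw [Nat.add_zero, xorb_zero, pow_zero, one_mul]; ring
    | succ n ih =>
        rw [← Nat.add_assoc, xorb_step hα0 hβ0, xorb_step hα0 hβ0,
          show p + n = n + p by omega, uItin_per hper n]
        rw [show xorb α β (n + p) = xorb α β (p + n) by rw [Nat.add_comm]]
        rw [pow_succ]
        nlinarith [ih]
  rcases lt_or_ge 0 (xorb α β p) with h | h
  · exfalso
    obtain ⟨n, hn⟩ := pow_unbounded_of_one_lt (1 / xorb α β p) hβ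
    have h1 : 1 < β ^ n * xorb α β p := by
      rw [div_lt_iff₀ h] at hn
      nlinarith
    have h2 := key n
    have := (xorb_mem (α := α) (β := β) (p + n)).2
    have := (xorb_mem (α := α) (β := β) n).1
    linarith
  · exact le_antisymm h (xorb_mem _).1

lemma xorb_pos (hα0 : 0 ≤ α) (hβ : 1 < β)
    (hmin : ∀ m, 1 ≤ m → m < p → shft^[m] (uItin α β) ≠ uItin α β)
    (j : ℕ) (h1 : 1 ≤ j) (h2 : j < p) : 0 < xorb α β j := by
  rcases lt_or_ge 0 (xorb α β j) with h | h
  · exact h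
  · exfalso
    have hz : xorb α β j = 0 := le_antisymm h (xorb_mem _).1
    exact hmin j h1 h2 (shift_eq_of_xorb_zero hα0 (by linarith) j hz)

lemma uItin_last_cast (hα0 : 0 ≤ α) (hβ : 1 < β) (hp : 1 < p)
    (hper : shft^[p] (uItin α β) = uItin α β) :
    (uItin α β (p-1) : ℝ) = β * xorb α β (p-1) + α := by
  have hβ0 : (0:ℝ) < β := by linarith
  have h1 : p - 1 + 1 = p := by omega
  have := xorb_step (α := α) (β := β) hα0 hβ0 (p-1)
  rw [h1, xorb_p_zero hα0 hβ hper] at this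
  linarith

lemma uItin_last_pos (hα0 : 0 ≤ α) (hβ : 1 < β) (hp : 1 < p)
    (hper : shft^[p] (uItin α β) = uItin α β)
    (hmin : ∀ m, 1 ≤ m → m < p → shft^[m] (uItin α β) ≠ uItin α β) :
    1 ≤ uItin α β (p-1) := by
  have hx := xorb_pos hα0 hβ hmin (p-1) (by omega) (by omega)
  have := uItin_last_cast hα0 hβ hp hper
  have hpos : (0:ℝ) < (uItin α β (p-1) : ℝ) := by nlinarith
  exact_mod_cast Nat.one_le_iff_ne_zero.mpr (by
    intro h0
    rw [h0] at hpos
    norm_num at hpos)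

lemma uItin_per_mul (hper : shft^[p] (uItin α β) = uItin α β) (j n : ℕ) :
    uItin α β (n + j * p) = uItin α β n := by
  induction j with
  | zero => rw [Nat.zero_mul, Nat.add_zero]
  | succ j ih =>
      rw [show n + (j+1) * p = (n + j * p) + p by ring, uItin_per hper, ih]

end Periodic
section UV

variable {α β : ℝ}

lemma lexLe_uItin (hα0 : 0 ≤ α) (hα1 : α < 1) (hβ : 1 < β)
    (s : ℕ → ℕ) (hs : phiBInf α β s = 0) : lexLe s (uItin α β) := by
  have hβ0 : (0:ℝ) < β := by linarith
  by_cases he : s = uItin α β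
  · exact Or.inl he
  · have hex : ∃ n, s n ≠ uItin α β n := by
      by_contra hc
      push_neg at hc
      exact he (funext hc)
    have hm : s (Nat.find hex) ≠ uItin α β (Nat.find hex) := Nat.find_spec hex
    have hlow : ∀ i, i < Nat.find hex → s i = uItin α β i := by
      intro i hi
      by_contra hc
      exact Nat.find_min hex hi hc
    set m := Nat.find hex with hmdef
    rcases Nat.lt_or_ge (s m) (uItin α β m) with h | h
    · exact Or.inr ⟨m, hlow, h⟩
    · exfalso
      have h' : uItin α β m < s m := lt_of_le_of_ne h (Ne.symm hm)
      -- chain downward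
      have key : ∀ j, j ≤ m → xorb α β (m - j) < phiBInf α β (shft^[m - j] s) := by
        intro j
        induction j with
        | zero =>
            intro _
            rw [Nat.sub_zero]
            rw [phiBInf_rec_iter (α := α) hβ0 s m]
            have hb1 : α ≤ β * xorb α β m + α := by
              nlinarith [(xorb_mem (α := α) (β := β) m).1]
            have hb2 : β * xorb α β m + α < α + β := by
              nlinarith [(xorb_mem (α := α) (β := β) m).2]
            have ha : β * xorb α β m + α < (s m : ℝ) := by
              have := (uItin_bounds hα0 hβ0 m).2
              have hcast : (uItin α β m : ℝ) + 1 ≤ (s m : ℝ) := by exact_mod_cast h'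
              linarith
            have h1 : phiB α β (β * xorb α β m + α) < phiB α β (s m) :=
              phiB_lt_left hβ0 hb1 hb2 ha
            have h2 : phiB α β (s m) ≤ phiB α β (s m + phiBInf α β (shft^[m+1] s)) :=
              phiB_mono hβ0 (by
                have := phiBInf_nonneg (α := α) hβ0 (shft^[m+1] s)
                linarith)
            have h3 : phiB α β (β * xorb α β m + α) = xorb α β m := by
              have := xphiB (α := α) (β := β) hα0 hβ0 m
              have harg : (uItin α β m : ℝ) + xorb α β (m+1) = β * xorb α β m + α := by
                have := xorb_step (α := α) (β := β) hα0 hβ0 m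
                linarith
              rw [← harg]
              exact this
            linarith
        | succ j ih =>
            intro hj
            have hij := ih (by omega)
            rcases Nat.lt_or_ge m (j+1) with hc | hc
            · have : m - (j+1) = m - j := by omega
              rw [this]; exact hij
            · set i := m - (j+1) with hidef
              have hi1 : i + 1 = m - j := by omega
              have him : i < m := by omega
              have hdig : s i = uItin α β i := hlow i him
              rw [phiBInf_rec_iter (α := α) hβ0 s i, hdig]
              have hb1 : α ≤ β * xorb α β i + α := by
                nlinarith [(xorb_mem (α := α) (β := β) i).1]
              have hb2 : β * xorb α β i + α < α + β := by
                nlinarith [(xorb_mem (α := α) (β := β) i).2]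
              have harg : (uItin α β i : ℝ) + xorb α β (i+1) = β * xorb α β i + α := by
                have := xorb_step (α := α) (β := β) hα0 hβ0 i
                linarith
              have hlt : β * xorb α β i + α <
                  (uItin α β i : ℝ) + phiBInf α β (shft^[i+1] s) := by
                rw [← harg]
                have : xorb α β (i+1) < phiBInf α β (shft^[i+1] s) := by
                  rw [hi1] at *
                  exact hij
                linarith
              have h1 : phiB α β (β * xorb α β i + α) <
                  phiB α β (uItin α β i + phiBInf α β (shft^[i+1] s)) :=
                phiB_lt_left hβ0 hb1 hb2 hlt
              have h3 : phiB α β (β * xorb α β i + α) = xorb α β i := by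
                rw [← harg]; exact xphiB hα0 hβ0 i
              linarith
      have := key m (le_refl m)
      rw [Nat.sub_self] at this
      rw [show shft^[0] s = s from rfl, hs, xorb_zero] at this
      exact absurd this (lt_irrefl 0)

lemma vItin_lexLe (hα0 : 0 ≤ α) (hα1 : α < 1) (hβ : 1 < β)
    (s : ℕ → ℕ) (hs : phiBInf α β s = 1) : lexLe (vItin α β) s := by
  have hβ0 : (0:ℝ) < β := by linarith
  by_cases he : vItin α β = s
  · exact Or.inl he
  · have hex : ∃ n, vItin α β n ≠ s n := by
      by_contra hc
      push_neg at hc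
      exact he (funext hc)
    have hm : vItin α β (Nat.find hex) ≠ s (Nat.find hex) := Nat.find_spec hex
    have hlow : ∀ i, i < Nat.find hex → vItin α β i = s i := by
      intro i hi
      by_contra hc
      exact Nat.find_min hex hi hc
    set m := Nat.find hex with hmdef
    rcases Nat.lt_or_ge (vItin α β m) (s m) with h | h
    · exact Or.inr ⟨m, hlow, h⟩
    · exfalso
      have h' : s m < vItin α β m := lt_of_le_of_ne h hm.symm
      have key : ∀ j, j ≤ m → phiBInf α β (shft^[m - j] s) < yorb α β (m - j) := by
        intro j
        induction j with
        | zero =>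
            intro _
            rw [Nat.sub_zero]
            rw [phiBInf_rec_iter (α := α) hβ0 s m]
            have hy0 := (yorb_mem (α := α) (β := β) m).1
            have hy1 := (yorb_mem (α := α) (β := β) m).2
            have ha1 : α < β * yorb α β m + α := by nlinarith
            have ha2 : β * yorb α β m + α ≤ α + β := by nlinarith
            have hb : (s m : ℝ) + phiBInf α β (shft^[m+1] s) < β * yorb α β m + α := by
              have h1 : (s m : ℝ) + 1 ≤ (vItin α β m : ℝ) := by exact_mod_cast h'
              have h2 := phiBInf_le_one (α := α) hβ0 (shft^[m+1] s)
              have h3 := (vItin_bounds hα0 hβ0 m).1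
              linarith
            have h1 : phiB α β ((s m : ℝ) + phiBInf α β (shft^[m+1] s)) <
                phiB α β (β * yorb α β m + α) :=
              phiB_lt_right hβ0 ha1 ha2 hb
            have h3 : phiB α β (β * yorb α β m + α) = yorb α β m := by
              have harg : (vItin α β m : ℝ) + yorb α β (m+1) = β * yorb α β m + α := by
                have := yorb_step (α := α) (β := β) hα0 hβ0 m
                linarith
              rw [← harg]
              exact yphiB hα0 hβ0 m
            linarith
        | succ j ih =>
            intro hj
            have hij := ih (by omega)
            rcases Nat.lt_or_ge m (j+1) with hc | hc
            · have : m - (j+1) = m - j := by omega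
              rw [this]; exact hij
            · set i := m - (j+1) with hidef
              have hi1 : i + 1 = m - j := by omega
              have him : i < m := by omega
              have hdig : s i = vItin α β i := (hlow i him).symm
              rw [phiBInf_rec_iter (α := α) hβ0 s i, hdig]
              have hy0 := (yorb_mem (α := α) (β := β) i).1
              have hy1 := (yorb_mem (α := α) (β := β) i).2
              have ha1 : α < β * yorb α β i + α := by nlinarith
              have ha2 : β * yorb α β i + α ≤ α + β := by nlinarith
              have harg : (vItin α β i : ℝ) + yorb α β (i+1) = β * yorb α β i + α := by
                have := yorb_step (α := α) (β := β) hα0 hβ0 i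
                linarith
              have hb : (vItin α β i : ℝ) + phiBInf α β (shft^[i+1] s) <
                  β * yorb α β i + α := by
                rw [← harg]
                have : phiBInf α β (shft^[i+1] s) < yorb α β (i+1) := by
                  rw [hi1] at *
                  exact hij
                linarith
              have h1 : phiB α β ((vItin α β i : ℝ) + phiBInf α β (shft^[i+1] s)) <
                  phiB α β (β * yorb α β i + α) :=
                phiB_lt_right hβ0 ha1 ha2 hb
              have h3 : phiB α β (β * yorb α β i + α) = yorb α β i := by
                rw [← harg]; exact yphiB hα0 hβ0 i
              linarith
      have := key m (le_refl m)
      rw [Nat.sub_self] at this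
      rw [show shft^[0] s = s from rfl, hs, yorb_zero] at this
      exact absurd this (lt_irrefl 1)

end UV
section Chain

variable {α β : ℝ} {p : ℕ}

lemma chain_eq (hα0 : 0 ≤ α) (hα1 : α < 1) (hβ : 1 < β) (hp : 1 < p)
    (hmin : ∀ m, 1 ≤ m → m < p → shft^[m] (uItin α β) ≠ uItin α β)
    (s : ℕ → ℕ) (hs1 : phiBInf α β (shft s) = α)
    (m : ℕ) (hm : m ≤ p - 1)
    (hdig : ∀ i, 1 ≤ i → i < m → s i = uItin α β i) :
    ∀ j, 1 ≤ j → j ≤ m → phiBInf α β (shft^[j] s) = xorb α β j := by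
  have hβ0 : (0:ℝ) < β := by linarith
  intro j
  induction j with
  | zero => omega
  | succ j ih =>
      intro h1 hle
      rcases Nat.eq_zero_or_pos j with rfl | hj
      · rw [Function.iterate_one, hs1, xorb_one hα0 hα1]
      · have hIH : phiBInf α β (shft^[j] s) = xorb α β j := ih hj (by omega)
        have hxj : 0 < xorb α β j := xorb_pos hα0 hβ hmin j hj (by omega)
        have hxj1 := (xorb_mem (α := α) (β := β) j).2
        have hdigj : s j = uItin α β j := hdig j hj (by omega)
        have hrec := phiBInf_rec_iter (α := α) hβ0 s j
        rw [hdigj] at hrec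
        have harg : (uItin α β j : ℝ) + xorb α β (j+1) = β * xorb α β j + α := by
          have := xorb_step (α := α) (β := β) hα0 hβ0 j
          linarith
        have hb1 : α < β * xorb α β j + α := by nlinarith
        have hb2 : β * xorb α β j + α < α + β := by nlinarith
        have hbphi : phiB α β (β * xorb α β j + α) = xorb α β j := by
          rw [← harg]; exact xphiB hα0 hβ0 j
        rcases lt_trichotomy (phiBInf α β (shft^[j+1] s)) (xorb α β (j+1)) with hc | hc | hc
        · exfalso
          have : phiB α β ((uItin α β j : ℝ) + phiBInf α β (shft^[j+1] s)) <
              phiB α β (β * xorb α β j + α) :=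
            phiB_lt_right hβ0 hb1 hb2.le (by rw [← harg]; linarith)
          rw [← hrec, hbphi, hIH] at this
          exact absurd this (lt_irrefl _)
        · exact hc
        · exfalso
          have : phiB α β (β * xorb α β j + α) <
              phiB α β ((uItin α β j : ℝ) + phiBInf α β (shft^[j+1] s)) :=
            phiB_lt_left hβ0 hb1.le hb2 (by rw [← harg]; linarith)
          rw [← hrec, hbphi, hIH] at this
          exact absurd this (lt_irrefl _)

lemma tpm_eq (hα0 : 0 ≤ α) (hα1 : α < 1) (hβ : 1 < β) (hp : 1 < p)
    (hmin : ∀ m, 1 ≤ m → m < p → shft^[m] (uItin α β) ≠ uItin α β)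
    (s : ℕ → ℕ) (hs1 : phiBInf α β (shft s) = α)
    (hdig : ∀ i, 1 ≤ i → i < p - 1 → s i = uItin α β i) :
    phiBInf α β (shft^[p-1] s) = xorb α β (p-1) :=
  chain_eq hα0 hα1 hβ hp hmin s hs1 (p-1) (le_refl _) hdig (p-1) (by omega) (le_refl _)

end Chain

section Cases

variable {α β : ℝ} {p : ℕ}

/-- Common context for the digit-case analysis. -/
lemma case_setup (hα0 : 0 ≤ α) (hα1 : α < 1) (hβ : 1 < β) (hp : 1 < p)
    (hper : shft^[p] (uItin α β) = uItin α β)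
    (hmin : ∀ m, 1 ≤ m → m < p → shft^[m] (uItin α β) ≠ uItin α β) :
    0 < xorb α β (p-1) ∧ xorb α β (p-1) < 1 ∧
    (uItin α β (p-1) : ℝ) = β * xorb α β (p-1) + α ∧
    phiB α β (uItin α β (p-1)) = xorb α β (p-1) := by
  have hβ0 : (0:ℝ) < β := by linarith
  have h1 : 0 < xorb α β (p-1) := xorb_pos hα0 hβ hmin (p-1) (by omega) (by omega)
  have h2 := (xorb_mem (α := α) (β := β) (p-1)).2
  have h3 := uItin_last_cast hα0 hβ hp hper
  refine ⟨h1, h2, h3, ?_⟩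
  have hp1 : p - 1 + 1 = p := by omega
  have := xphiB (α := α) (β := β) hα0 hβ0 (p-1)
  rw [hp1, xorb_p_zero hα0 hβ hper, add_zero] at this
  exact this

/-- Case A: a digit strictly below the itinerary digit at position `1 ≤ m ≤ p-2`
is impossible. -/
lemma caseA (hα0 : 0 ≤ α) (hα1 : α < 1) (hβ : 1 < β) (hp : 1 < p)
    (hper : shft^[p] (uItin α β) = uItin α β)
    (hmin : ∀ m, 1 ≤ m → m < p → shft^[m] (uItin α β) ≠ uItin α β)
    (s : ℕ → ℕ) (hs1 : phiBInf α β (shft s) = α)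
    (m : ℕ) (hm1 : 1 ≤ m) (hm2 : m ≤ p - 2)
    (hdig : ∀ i, 1 ≤ i → i < m → s i = uItin α β i)
    (hlt : s m < uItin α β m) : False := by
  have hβ0 : (0:ℝ) < β := by linarith
  have hchain := chain_eq hα0 hα1 hβ hp hmin s hs1 m (by omega) hdig m hm1 (le_refl m)
  have hxm : 0 < xorb α β m := xorb_pos hα0 hβ hmin m hm1 (by omega)
  have hxm1 := (xorb_mem (α := α) (β := β) m).2
  have hxm1pos : 0 < xorb α β (m+1) := xorb_pos hα0 hβ hmin (m+1) (by omega) (by omega)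
  have hrec := phiBInf_rec_iter (α := α) hβ0 s m
  have harg : (uItin α β m : ℝ) + xorb α β (m+1) = β * xorb α β m + α := by
    have := xorb_step (α := α) (β := β) hα0 hβ0 m
    linarith
  have hb1 : α < β * xorb α β m + α := by nlinarith
  have hb2 : β * xorb α β m + α ≤ α + β := by nlinarith
  have hbphi : phiB α β (β * xorb α β m + α) = xorb α β m := by
    rw [← harg]; exact xphiB hα0 hβ0 m
  have hcast : (s m : ℝ) + 1 ≤ (uItin α β m : ℝ) := by exact_mod_cast hlt
  have hle : (s m : ℝ) + phiBInf α β (shft^[m+1] s) < β * xorb α β m + α := by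
    have h2 := phiBInf_le_one (α := α) hβ0 (shft^[m+1] s)
    rw [← harg]
    linarith
  have : phiB α β ((s m : ℝ) + phiBInf α β (shft^[m+1] s)) <
      phiB α β (β * xorb α β m + α) := phiB_lt_right hβ0 hb1 hb2 hle
  rw [← hrec, hbphi, hchain] at this
  exact absurd this (lt_irrefl _)

/-- Case B: digit at `p-1` at most `u_{p-1} - 2` is impossible. -/
lemma caseB (hα0 : 0 ≤ α) (hα1 : α < 1) (hβ : 1 < β) (hp : 1 < p)
    (hper : shft^[p] (uItin α β) = uItin α β)
    (hmin : ∀ m, 1 ≤ m → m < p → shft^[m] (uItin α β) ≠ uItin α β)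
    (s : ℕ → ℕ) (hs1 : phiBInf α β (shft s) = α)
    (hdig : ∀ i, 1 ≤ i → i < p - 1 → s i = uItin α β i)
    (hlt : s (p-1) + 2 ≤ uItin α β (p-1)) : False := by
  have hβ0 : (0:ℝ) < β := by linarith
  obtain ⟨hx1, hx2, hcast, hphi⟩ := case_setup hα0 hα1 hβ hp hper hmin
  have hchain := tpm_eq hα0 hα1 hβ hp hmin s hs1 hdig
  have hrec := phiBInf_rec_iter (α := α) hβ0 s (p-1)
  have hb1 : α < (uItin α β (p-1) : ℝ) := by nlinarith
  have hb2 : (uItin α β (p-1) : ℝ) ≤ α + β := by nlinarith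
  have hcast2 : (s (p-1) : ℝ) + 2 ≤ (uItin α β (p-1) : ℝ) := by exact_mod_cast hlt
  have hle : (s (p-1) : ℝ) + phiBInf α β (shft^[p-1+1] s) < (uItin α β (p-1) : ℝ) := by
    have h2 := phiBInf_le_one (α := α) hβ0 (shft^[p-1+1] s)
    linarith
  have : phiB α β ((s (p-1) : ℝ) + phiBInf α β (shft^[p-1+1] s)) <
      phiB α β (uItin α β (p-1)) := phiB_lt_right hβ0 hb1 hb2 hle
  rw [← hrec, hphi, hchain] at this
  exact absurd this (lt_irrefl _)

/-- Case C: digit `u_{p-1} - 1` at position `p-1` forces the tail to code `1`. -/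
lemma caseC (hα0 : 0 ≤ α) (hα1 : α < 1) (hβ : 1 < β) (hp : 1 < p)
    (hper : shft^[p] (uItin α β) = uItin α β)
    (hmin : ∀ m, 1 ≤ m → m < p → shft^[m] (uItin α β) ≠ uItin α β)
    (s : ℕ → ℕ) (hs1 : phiBInf α β (shft s) = α)
    (hdig : ∀ i, 1 ≤ i → i < p - 1 → s i = uItin α β i)
    (heq : s (p-1) + 1 = uItin α β (p-1)) :
    phiBInf α β (shft^[p] s) = 1 := by
  have hβ0 : (0:ℝ) < β := by linarith
  obtain ⟨hx1, hx2, hcast, hphi⟩ := case_setup hα0 hα1 hβ hp hper hmin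
  have hchain := tpm_eq hα0 hα1 hβ hp hmin s hs1 hdig
  have hrec := phiBInf_rec_iter (α := α) hβ0 s (p-1)
  have hp1 : p - 1 + 1 = p := by omega
  rw [hp1] at hrec
  have hb1 : α < (uItin α β (p-1) : ℝ) := by nlinarith
  have hb2 : (uItin α β (p-1) : ℝ) ≤ α + β := by nlinarith
  have hcast2 : (s (p-1) : ℝ) + 1 = (uItin α β (p-1) : ℝ) := by exact_mod_cast heq
  rcases lt_or_ge (phiBInf α β (shft^[p] s)) 1 with hc | hc
  · exfalso
    have hle : (s (p-1) : ℝ) + phiBInf α β (shft^[p] s) < (uItin α β (p-1) : ℝ) := by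
      linarith
    have : phiB α β ((s (p-1) : ℝ) + phiBInf α β (shft^[p] s)) <
        phiB α β (uItin α β (p-1)) := phiB_lt_right hβ0 hb1 hb2 hle
    rw [← hrec, hphi, hchain] at this
    exact absurd this (lt_irrefl _)
  · exact le_antisymm (phiBInf_le_one hβ0 _) hc

/-- Case D: digit `u_{p-1}` at position `p-1` forces the tail to code `0`. -/
lemma caseD (hα0 : 0 ≤ α) (hα1 : α < 1) (hβ : 1 < β) (hp : 1 < p)
    (hper : shft^[p] (uItin α β) = uItin α β)
    (hmin : ∀ m, 1 ≤ m → m < p → shft^[m] (uItin α β) ≠ uItin α β)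
    (s : ℕ → ℕ) (hs1 : phiBInf α β (shft s) = α)
    (hdig : ∀ i, 1 ≤ i → i < p → s i = uItin α β i) :
    phiBInf α β (shft^[p] s) = 0 := by
  have hβ0 : (0:ℝ) < β := by linarith
  obtain ⟨hx1, hx2, hcast, hphi⟩ := case_setup hα0 hα1 hβ hp hper hmin
  have hchain := tpm_eq hα0 hα1 hβ hp hmin s hs1 (fun i h1 h2 => hdig i h1 (by omega))
  have hrec := phiBInf_rec_iter (α := α) hβ0 s (p-1)
  have hp1 : p - 1 + 1 = p := by omega
  rw [hp1] at hrec
  rw [hdig (p-1) (by omega) (by omega)] at hrec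
  have hb1 : α ≤ (uItin α β (p-1) : ℝ) := by nlinarith
  have hb2 : (uItin α β (p-1) : ℝ) < α + β := by nlinarith
  rcases lt_or_ge 0 (phiBInf α β (shft^[p] s)) with hc | hc
  · exfalso
    have hle : (uItin α β (p-1) : ℝ) < (uItin α β (p-1) : ℝ) + phiBInf α β (shft^[p] s) := by
      linarith
    have : phiB α β (uItin α β (p-1)) <
        phiB α β ((uItin α β (p-1) : ℝ) + phiBInf α β (shft^[p] s)) :=
      phiB_lt_left hβ0 hb1 hb2 hle
    rw [← hrec, hphi, hchain] at this
    exact absurd this (lt_irrefl _)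
  · exact le_antisymm hc (phiBInf_nonneg hβ0 _)

end Cases
section Classify

variable {α β : ℝ} {p : ℕ}

/-- From `φ̄_∞(s) = 0` deduce `s 0 = 0` and `φ̄_∞(σ s) ≤ α`. -/
lemma digit_zero (hα0 : 0 ≤ α) (hα1 : α < 1) (hβ : 1 < β)
    (s : ℕ → ℕ) (h : phiBInf α β s = 0) :
    s 0 = 0 ∧ phiBInf α β (shft s) ≤ α := by
  have hβ0 : (0:ℝ) < β := by linarith
  have hrec := phiBInf_rec (α := α) hβ0 s
  rw [h] at hrec
  have hle : (s 0 : ℝ) + phiBInf α β (shft s) ≤ α := phiB_eq_zero hβ0 hrec.symm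
  have h0 := phiBInf_nonneg (α := α) hβ0 (shft s)
  have : (s 0 : ℝ) < 1 := by linarith
  have hs0 : s 0 = 0 := by exact_mod_cast Nat.lt_one_iff.mp (by exact_mod_cast this)
  refine ⟨hs0, ?_⟩
  rw [hs0] at hle
  push_cast at hle
  linarith

/-- Dichotomy for a sequence coding `0` whose shift codes `α`. -/
lemma classify (hα0 : 0 ≤ α) (hα1 : α < 1) (hβ : 1 < β) (hp : 1 < p)
    (hper : shft^[p] (uItin α β) = uItin α β)
    (hmin : ∀ m, 1 ≤ m → m < p → shft^[m] (uItin α β) ≠ uItin α β)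
    (s : ℕ → ℕ) (hs0 : phiBInf α β s = 0) (hs1 : phiBInf α β (shft s) = α) :
    ((∀ i, i < p → s i = uItin α β i) ∧ phiBInf α β (shft^[p] s) = 0) ∨
    ((∀ i, i < p - 1 → s i = uItin α β i) ∧ s (p-1) + 1 = uItin α β (p-1) ∧
      phiBInf α β (shft^[p] s) = 1) := by
  have hβ0 : (0:ℝ) < β := by linarith
  have hle := lexLe_uItin hα0 hα1 hβ s hs0
  rcases hle with he | ⟨m, hag, hlt⟩
  · left
    have hdig : ∀ i, i < p → s i = uItin α β i := fun i _ => congrFun he i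
    exact ⟨hdig, caseD hα0 hα1 hβ hp hper hmin s hs1 (fun i _ h2 => hdig i h2)⟩
  · rcases Nat.lt_or_ge m p with hmp | hmp
    · -- m < p
      have hm0 : 1 ≤ m := by
        rcases Nat.eq_zero_or_pos m with rfl | h
        · exfalso
          rw [uItin_zero hα0 hα1 hβ0] at hlt
          omega
        · exact h
      rcases Nat.lt_or_ge m (p-1) with hm1 | hm1
      · exfalso
        exact caseA hα0 hα1 hβ hp hper hmin s hs1 m hm0 (by omega)
          (fun i h1 h2 => hag i h2) hlt
      · have hmeq : m = p - 1 := by omega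
        subst hmeq
        rcases Nat.lt_or_ge (s (p-1) + 1) (uItin α β (p-1)) with hc | hc
        · exfalso
          exact caseB hα0 hα1 hβ hp hper hmin s hs1 (fun i h1 h2 => hag i h2) (by omega)
        · have heq : s (p-1) + 1 = uItin α β (p-1) := by omega
          right
          exact ⟨fun i h2 => hag i h2, heq,
            caseC hα0 hα1 hβ hp hper hmin s hs1 (fun i h1 h2 => hag i h2) heq⟩
    · -- m ≥ p : prefix agrees
      left
      have hdig : ∀ i, i < p → s i = uItin α β i := fun i hi => hag i (by omega)
      exact ⟨hdig, caseD hα0 hα1 hβ hp hper hmin s hs1 (fun i _ h2 => hdig i h2)⟩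

/-- If `φ̄_∞(σu) = α`, `u ≼ σⁿu`, `u 0 = 0`, `φ̄_∞(σⁿu) = 0` and `u n = 0`, then
`φ̄_∞(σ^{n+1}u) = α`. -/
lemma tnext_alpha (hα0 : 0 ≤ α) (hα1 : α < 1) (hβ : 1 < β)
    (u : ℕ → ℕ) (huα : phiBInf α β (shft u) = α) (n : ℕ)
    (hb : lexLe u (shft^[n] u)) (h0 : u 0 = 0)
    (hn0 : phiBInf α β (shft^[n] u) = 0) :
    phiBInf α β (shft^[n+1] u) = α := by
  have hβ0 : (0:ℝ) < β := by linarith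
  have hd := digit_zero hα0 hα1 hβ (shft^[n] u) hn0
  have hun : u n = 0 := by
    have := hd.1
    rwa [shft_iter, Nat.zero_add] at this
  have hupper : phiBInf α β (shft^[n+1] u) ≤ α := by
    have := hd.2
    rwa [shft_shft_iter] at this
  have hlower : α ≤ phiBInf α β (shft^[n+1] u) := by
    rcases hb with he | ⟨r, hag, hlt⟩
    · have heq2 : shft^[n+1] u = shft u := by
        rw [← shft_shft_iter, ← he]
      exact le_of_eq (huα.symm.trans (congrArg (phiBInf α β) heq2.symm))
    · have hr : 1 ≤ r := by
        rcases Nat.eq_zero_or_pos r with rfl | h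
        · exfalso
          rw [shft_iter, Nat.zero_add, hun, h0] at hlt
          omega
        · exact h
      have hsh : lexLe (shft u) (shft^[n+1] u) := by
        right
        refine ⟨r - 1, ?_, ?_⟩
        · intro i hi
          show u (i+1) = shft^[n+1] u i
          rw [shft_iter]
          have := hag (i+1) (by omega)
          rw [shft_iter] at this
          rw [show i + (n+1) = i + 1 + n by omega]
          exact this
        · show u (r - 1 + 1) < shft^[n+1] u (r - 1)
          rw [shft_iter, show r - 1 + (n+1) = r + n by omega,
            show r - 1 + 1 = r by omega]
          rw [shft_iter] at hlt
          exact hlt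
      have := phiBInf_mono (α := α) hβ0 hsh
      linarith [huα]
  linarith

end Classify
section BigInduction

variable {α β : ℝ} {p : ℕ}

lemma prefix_implies_eq (hα0 : 0 ≤ α) (hα1 : α < 1) (hβ : 1 < β) (hp : 1 < p)
    (hper : shft^[p] (uItin α β) = uItin α β)
    (hmin : ∀ m, 1 ≤ m → m < p → shft^[m] (uItin α β) ≠ uItin α β)
    (u : ℕ → ℕ) (hu0 : phiBInf α β u = 0) (huα : phiBInf α β (shft u) = α)
    (hbet : ∀ n, lexLe u (shft^[n] u))
    (hpre : ∀ i, i < p → u i = uItin α β i) : u = uItin α β := by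
  have hβ0 : (0:ℝ) < β := by linarith
  have h00 : u 0 = 0 := (digit_zero hα0 hα1 hβ u hu0).1
  have key : ∀ j, 1 ≤ j → (∀ i, i < j*p → u i = uItin α β i) ∧
      phiBInf α β (shft^[j*p] u) = 0 ∧ phiBInf α β (shft^[j*p+1] u) = α := by
    intro j hj
    induction j, hj using Nat.le_induction with
    | base =>
        have hdig : ∀ i, i < 1*p → u i = uItin α β i := by
          intro i hi
          exact hpre i (by omega)
        have ht : phiBInf α β (shft^[1*p] u) = 0 := by
          rw [one_mul]
          exact caseD hα0 hα1 hβ hp hper hmin u huα (fun i _ h2 => hpre i h2)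
        refine ⟨hdig, ht, ?_⟩
        rw [show 1*p = p from one_mul p] at ht ⊢
        exact tnext_alpha hα0 hα1 hβ u huα p (hbet p) h00 ht
    | succ j hj ih =>
        obtain ⟨ihdig, iht0, iht1⟩ := ih
        set s := shft^[j*p] u with hsdef
        have hs0 : phiBInf α β s = 0 := iht0
        have hs1 : phiBInf α β (shft s) = α := by
          rw [hsdef, shft_shft_iter]
          exact iht1
        have hsval : ∀ r, s r = u (r + j*p) := fun r => shft_iter u (j*p) r
        rcases classify hα0 hα1 hβ hp hper hmin s hs0 hs1 with
          ⟨hsd, ht2p⟩ | ⟨hsd, hz1, _⟩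
        · -- good case: s has prefix a
          have hdig : ∀ i, i < (j+1)*p → u i = uItin α β i := by
            intro i hi
            rcases Nat.lt_or_ge i (j*p) with h | h
            · exact ihdig i h
            · have hr : i - j*p < p := by
                have : (j+1)*p = j*p + p := by ring
                omega
              have h1 : u i = s (i - j*p) := by
                rw [hsval, show i - j*p + j*p = i by omega]
              rw [h1, hsd _ hr, ← uItin_per_mul hper j (i - j*p),
                show i - j*p + j*p = i by omega]
          have htq : phiBInf α β (shft^[(j+1)*p] u) = 0 := by
            have heq : shft^[p] s = shft^[(j+1)*p] u := by
              rw [hsdef, ← Function.iterate_add_apply,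
                show p + j*p = (j+1)*p by ring]
            rw [← heq]
            exact ht2p
          refine ⟨hdig, htq, ?_⟩
          exact tnext_alpha hα0 hα1 hβ u huα ((j+1)*p) (hbet _) h00 htq
        · -- bad case: contradiction via hbet
          exfalso
          have hup : u (p-1) = uItin α β (p-1) := ihdig (p-1) (by
            have : p ≤ j*p := Nat.le_mul_of_pos_left p hj
            omega)
          have hslt : lexLt s u := by
            refine ⟨p-1, ?_, ?_⟩
            · intro i hi
              rw [hsd i hi, ihdig i (by
                have : p ≤ j*p := Nat.le_mul_of_pos_left p hj
                omega)]
            · rw [hup]; omega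
          rcases hbet (j*p) with he | hlt
          · rw [← hsdef] at he
            obtain ⟨m, _, hm⟩ := hslt
            rw [← he] at hm
            omega
          · rw [← hsdef] at hlt
            exact lexLt_asymm hslt hlt
  funext n
  have hnp : n < (n+1)*p := by
    have : n + 1 ≤ (n+1)*p := Nat.le_mul_of_pos_right (n+1) (by omega)
    omega
  exact (key (n+1) (by omega)).1 n hnp

end BigInduction
/-- **Description of the solutions at 0 in the periodic case.** Let `0 ≤ α < 1 < β`,
`k = ⌈α+β⌉`, `γ = α+β−k+1`. Suppose `u^{α,β}` is periodic with minimal period `p > 1`,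
with period block `a = (u^{α,β}₀, …, u^{α,β}_{p−1})` (then `u^{α,β}_{p−1} ≥ 1`). Let
`u ∈ A^ℕ` satisfy `φ̄_∞^{α,β}(u) = 0` and `φ̄_∞^{α,β}(σu) = α`, and suppose there is a
`w ∈ A^ℕ` such that for all `n ≥ 0`: `u ≼ σⁿu ≼ w`, `φ̄_∞^{α,β}(w) = 1` and
`φ̄_∞^{α,β}(σw) ≤ γ`. Then `a′ ⌢ v^{α,β} ≼ u ≼ u^{α,β}`, where
`a′ = a₀ ⋯ a_{p−2} (a_{p−1} − 1)`. Moreover the following are equivalent: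
`u = u^{α,β}`; `a` is a prefix of `u`; `φ̄_∞^{α,β}(σᵖu) < 1`. -/
theorem periodic_case_at_zero (α β : ℝ) (hα0 : 0 ≤ α) (hα1 : α < 1) (hβ : 1 < β)
    (p : ℕ) (hp : 1 < p)
    (hper : shft^[p] (uItin α β) = uItin α β)
    (hmin : ∀ m, 1 ≤ m → m < p → shft^[m] (uItin α β) ≠ uItin α β)
    (u : ℕ → ℕ) (hu : ∀ i, u i < kAB α β)
    (hu0 : phiBInf α β u = 0) (huα : phiBInf α β (shft u) = α)
    (w : ℕ → ℕ) (hw : ∀ i, w i < kAB α β)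
    (hbetween : ∀ n, lexLe u (shft^[n] u) ∧ lexLe (shft^[n] u) w)
    (hw1 : phiBInf α β w = 1)
    (hwγ : phiBInf α β (shft w) ≤ α + β - kAB α β + 1) :
    1 ≤ uItin α β (p - 1) ∧
    lexLe (wcat p (fun i => if i = p - 1 then uItin α β (p - 1) - 1 else uItin α β i)
      (vItin α β)) u ∧
    lexLe u (uItin α β) ∧
    ((u = uItin α β ↔ ∀ i, i < p → u i = uItin α β i) ∧
     ((∀ i, i < p → u i = uItin α β i) ↔ phiBInf α β (shft^[p] u) < 1)) := by
  have hβ0 : (0:ℝ) < β := by linarith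
  have hz1 : 1 ≤ uItin α β (p-1) := uItin_last_pos hα0 hβ hp hper hmin
  set c : ℕ → ℕ :=
    wcat p (fun i => if i = p - 1 then uItin α β (p - 1) - 1 else uItin α β i)
      (vItin α β) with hcdef
  have hclow : ∀ i, i < p - 1 → c i = uItin α β i := by
    intro i hi
    show (if i < p then (if i = p - 1 then uItin α β (p - 1) - 1 else uItin α β i)
      else vItin α β (i - p)) = uItin α β i
    rw [if_pos (by omega), if_neg (by omega)]
  have hcp1 : c (p-1) = uItin α β (p-1) - 1 := by
    show (if p-1 < p then (if p-1 = p - 1 then uItin α β (p - 1) - 1 else uItin α β (p-1))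
      else vItin α β (p-1 - p)) = _
    rw [if_pos (by omega), if_pos rfl]
  have hctail : ∀ i, p ≤ i → c i = vItin α β (i - p) := by
    intro i hi
    show (if i < p then _ else vItin α β (i - p)) = vItin α β (i - p)
    rw [if_neg (by omega)]
  have hshval : ∀ r, (shft^[p] u) r = u (r + p) := fun r => shft_iter u p r
  -- the classification of u
  have hcl := classify hα0 hα1 hβ hp hper hmin u hu0 huα
  have goal2 : lexLe c u := by
    rcases hcl with ⟨hdig, _⟩ | ⟨hdig, hzz, ht1⟩
    · right
      refine ⟨p-1, ?_, ?_⟩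
      · intro i hi
        rw [hclow i hi, hdig i (by omega)]
      · rw [hcp1, hdig (p-1) (by omega)]
        omega
    · -- u has prefix a'
      have hupm : u (p-1) = uItin α β (p-1) - 1 := by omega
      have hV : lexLe (vItin α β) (shft^[p] u) := vItin_lexLe hα0 hα1 hβ _ ht1
      have hclowfull : ∀ i, i < p → c i = u i := by
        intro i hi
        rcases Nat.lt_or_ge i (p-1) with h | h
        · rw [hclow i h, hdig i h]
        · have : i = p - 1 := by omega
          subst this
          rw [hcp1, hupm]
      rcases hV with he | ⟨r, hag, hlt⟩
      · left
        funext i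
        rcases Nat.lt_or_ge i p with h | h
        · exact hclowfull i h
        · rw [hctail i h, he, hshval, show i - p + p = i by omega]
      · right
        refine ⟨p + r, ?_, ?_⟩
        · intro i hi
          rcases Nat.lt_or_ge i p with h | h
          · exact hclowfull i h
          · rw [hctail i h, hag (i - p) (by omega), hshval,
              show i - p + p = i by omega]
        · rw [hctail (p+r) (by omega), show p + r - p = r by omega]
          have := hlt
          rw [hshval] at this
          rw [show r + p = p + r by omega] at this
          exact this
  have goal3 : lexLe u (uItin α β) := lexLe_uItin hα0 hα1 hβ u hu0
  refine ⟨hz1, goal2, goal3, ?_, ?_⟩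
  · constructor
    · intro heq i _
      rw [heq]
    · intro hpre
      exact prefix_implies_eq hα0 hα1 hβ hp hper hmin u hu0 huα
        (fun n => (hbetween n).1) hpre
  · constructor
    · intro hpre
      rw [caseD hα0 hα1 hβ hp hper hmin u huα (fun i _ h2 => hpre i h2)]
      norm_num
    · intro hlt1
      rcases hcl with ⟨hdig, _⟩ | ⟨_, _, ht1⟩
      · exact hdig
      · exfalso
        rw [ht1] at hlt1
        exact absurd hlt1 (lt_irrefl 1)
end

section
/- Lipschitz dependence of φ̄_∞ on the parameters. Let k ≥ 2 and x ∈ A^ℕ. (1) If α ∈ [0,1] and 1 ≤ β < β′, then 0 ≤ φ̄_∞^{α,β}(x) − φ̄_∞^{α,β′}(x) ≤ (β′−β)/(β′−1). (2) If 0 ≤ α′ < α ≤ 1, β′ > 1, and α+β−k+1 = α′+β′−k+1 ∈ [0,1] (equal values of γ, so β = β′−(α−α′)), then 0 ≤ φ̄_∞^{α′,β′}(x) − φ̄_∞^{α,β}(x) ≤ (α−α′)/(β′−1). (3) For fixed α ∈ [0,1] and x ∈ A^ℕ, the map β ↦ φ̄_∞^{α,β}(x), defined for β ∈ [1,∞),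 is continuous at β = 1 (from the right). -/
open Filter Set

/-! ### Auxiliary lemmas -/

noncomputable def clampR (v : ℝ) : ℝ := max 0 (min 1 v)

lemma clampR_nonneg (v : ℝ) : 0 ≤ clampR v := le_max_left _ _

lemma clampR_le_one (v : ℝ) : clampR v ≤ 1 := max_le zero_le_one (min_le_left _ _)

lemma clampR_mono {v w : ℝ} (h : v ≤ w) : clampR v ≤ clampR w :=
  max_le_max le_rfl (min_le_min le_rfl h)

lemma clampR_of_nonpos {v : ℝ} (h : v ≤ 0) : clampR v = 0 :=
  max_eq_left ((min_le_right _ _).trans h)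

lemma clampR_of_one_le {v : ℝ} (h : 1 ≤ v) : clampR v = 1 := by
  unfold clampR; rw [min_eq_left h]; exact max_eq_right zero_le_one

lemma clampR_of_mem {v : ℝ} (h0 : 0 ≤ v) (h1 : v ≤ 1) : clampR v = v := by
  unfold clampR; rw [min_eq_right h1]; exact max_eq_right h0

lemma clampR_le {v w : ℝ} (h0 : 0 ≤ w) (h : v ≤ w) : clampR v ≤ w :=
  max_le h0 ((min_le_right _ _).trans h)

lemma clampR_lip {v w : ℝ} (h : v ≤ w) : clampR w ≤ clampR v + (w - v) := by
  unfold clampR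
  simp only [max_def, min_def]
  split_ifs <;> linarith

lemma phiB_eq_s10 (a b t : ℝ) (hb : 0 < b) : phiB a b t = clampR ((t - a) / b) := by
  unfold phiB
  split_ifs with h1 h2
  · rw [clampR_of_nonpos (div_nonpos_iff.mpr (Or.inr ⟨by linarith, hb.le⟩))]
  · rw [clampR_of_one_le (by rw [le_div_iff₀ hb]; linarith)]
  · rw [clampR_of_mem (div_nonneg (by linarith [not_le.1 h1]) hb.le)
      (by rw [div_le_one hb]; linarith [not_le.1 h2])]

lemma phiB_nonneg_s10 (a : ℝ) {b : ℝ} (hb : 0 < b) (t : ℝ) : 0 ≤ phiB a b t := by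
  rw [phiB_eq_s10 a b t hb]; exact clampR_nonneg _

lemma phiB_le_one' (a : ℝ) {b : ℝ} (hb : 0 < b) (t : ℝ) : phiB a b t ≤ 1 := by
  rw [phiB_eq_s10 a b t hb]; exact clampR_le_one _

lemma phiB_mono_s10 (a : ℝ) {b : ℝ} (hb : 0 < b) {s t : ℝ} (h : s ≤ t) :
    phiB a b s ≤ phiB a b t := by
  rw [phiB_eq_s10 a b s hb, phiB_eq_s10 a b t hb]
  apply clampR_mono
  gcongr

lemma phiB_lip (a : ℝ) {b : ℝ} (hb : 0 < b) {s t : ℝ} (h : s ≤ t) :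
    phiB a b t ≤ phiB a b s + (t - s) / b := by
  rw [phiB_eq_s10 a b s hb, phiB_eq_s10 a b t hb]
  have h1 : (s - a) / b ≤ (t - a) / b := by gcongr
  have h2 := clampR_lip h1
  have h3 : (t - a) / b - (s - a) / b = (t - s) / b := by
    rw [div_sub_div_same]; congr 1; ring
  linarith

lemma phiB_anti (a : ℝ) {b b' : ℝ} (hb : 0 < b) (hbb : b ≤ b') (t : ℝ) :
    phiB a b' t ≤ phiB a b t := by
  have hb' : 0 < b' := lt_of_lt_of_le hb hbb
  rw [phiB_eq_s10 a b t hb, phiB_eq_s10 a b' t hb']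
  rcases le_total t a with h | h
  · rw [clampR_of_nonpos (div_nonpos_iff.mpr (Or.inr ⟨by linarith, hb'.le⟩))]
    exact clampR_nonneg _
  · apply clampR_mono
    have hta : 0 ≤ t - a := by linarith
    gcongr

lemma phiB_anti_lip (a : ℝ) {b b' : ℝ} (hb : 0 < b) (hbb : b ≤ b') (t : ℝ) :
    phiB a b t ≤ phiB a b' t + (b' - b) / b' := by
  have hb' : 0 < b' := lt_of_lt_of_le hb hbb
  have hδ : 0 ≤ (b' - b) / b' := div_nonneg (by linarith) hb'.le
  rw [phiB_eq_s10 a b t hb, phiB_eq_s10 a b' t hb']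
  rcases le_total t a with h | h
  · rw [clampR_of_nonpos (div_nonpos_iff.mpr (Or.inr ⟨by linarith, hb.le⟩))]
    linarith [clampR_nonneg ((t - a) / b')]
  · rcases le_total t (a + b) with h2 | h2
    · rw [clampR_of_mem (div_nonneg (by linarith) hb.le) (by rw [div_le_one hb]; linarith),
        clampR_of_mem (div_nonneg (by linarith) hb'.le) (by rw [div_le_one hb']; linarith)]
      rw [← add_div, div_le_div_iff₀ hb hb']
      nlinarith [mul_nonneg (sub_nonneg.2 hbb) (sub_nonneg.2 h2)]
    · rw [clampR_of_one_le (by rw [le_div_iff₀ hb]; linarith)]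
      have h3 : b / b' ≤ clampR ((t - a) / b') := by
        unfold clampR
        refine le_trans (le_min ?_ ?_) (le_max_right _ _)
        · rw [div_le_one hb']; exact hbb
        · gcongr; linarith
      have h4 : b / b' + (b' - b) / b' = 1 := by field_simp; ring
      linarith

lemma phiB_shift_le {a a' b b' : ℝ} (ha : a' ≤ a) (hb : 0 < b)
    (hsum : a + b = a' + b') (t : ℝ) : phiB a b t ≤ phiB a' b' t := by
  have hb' : 0 < b' := by linarith
  rw [phiB_eq_s10 a b t hb, phiB_eq_s10 a' b' t hb']
  rcases le_total t a with h | h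
  · rw [clampR_of_nonpos (div_nonpos_iff.mpr (Or.inr ⟨by linarith, hb.le⟩))]
    exact clampR_nonneg _
  · rcases le_total t (a + b) with h2 | h2
    · apply clampR_mono
      rw [div_le_div_iff₀ hb hb']
      nlinarith [mul_nonneg (sub_nonneg.2 ha) (sub_nonneg.2 h2)]
    · rw [clampR_of_one_le (show (1:ℝ) ≤ (t - a) / b by rw [le_div_iff₀ hb]; linarith),
        clampR_of_one_le (show (1:ℝ) ≤ (t - a') / b' by rw [le_div_iff₀ hb']; linarith)]

lemma phiB_shift_ge {a a' b b' : ℝ} (ha : a' ≤ a) (hb : 0 < b)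
    (hsum : a + b = a' + b') (t : ℝ) :
    phiB a' b' t ≤ phiB a b t + (a - a') / b' := by
  have hb' : 0 < b' := by linarith
  have hbb : b ≤ b' := by linarith
  have hδ : 0 ≤ (a - a') / b' := div_nonneg (by linarith) hb'.le
  rw [phiB_eq_s10 a b t hb, phiB_eq_s10 a' b' t hb']
  rcases le_total t a with h | h
  · have h1 : clampR ((t - a') / b') ≤ (a - a') / b' :=
      clampR_le hδ (by gcongr <;> linarith)
    linarith [clampR_nonneg ((t - a) / b)]
  · rcases le_total t (a + b) with h2 | h2
    · rw [clampR_of_mem (div_nonneg (by linarith) hb.le) (by rw [div_le_one hb]; linarith),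
        clampR_of_mem (div_nonneg (by linarith) hb'.le) (by rw [div_le_one hb']; linarith)]
      have e : (t - a') / b' - (a - a') / b' = (t - a) / b' := by
        rw [div_sub_div_same]; congr 1; ring
      have hta : 0 ≤ t - a := by linarith
      have e2 : (t - a) / b' ≤ (t - a) / b := by gcongr
      linarith
    · rw [clampR_of_one_le (show (1:ℝ) ≤ (t - a) / b by rw [le_div_iff₀ hb]; linarith)]
      linarith [clampR_le_one ((t - a') / b')]

/-! ### Lemmas on `phiBN` and `phiBInf` -/

lemma phiBN_nonneg_s10 (a : ℝ) {b : ℝ} (hb : 0 < b) : ∀ n x, 0 ≤ phiBN a b n x := by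
  intro n
  induction n with
  | zero => intro x; simp [phiBN]
  | succ n ih => intro x; simp only [phiBN]; exact phiB_nonneg_s10 a hb _

lemma phiBN_le_one_s10 (a : ℝ) {b : ℝ} (hb : 0 < b) : ∀ n x, phiBN a b n x ≤ 1 := by
  intro n
  induction n with
  | zero => intro x; simp [phiBN]
  | succ n ih => intro x; simp only [phiBN]; exact phiB_le_one' a hb _

lemma phiBN_bddAbove (a : ℝ) {b : ℝ} (hb : 0 < b) (x : ℕ → ℕ) :
    BddAbove (Set.range fun n => phiBN a b n x) := by
  refine ⟨1, ?_⟩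
  rintro y ⟨n, rfl⟩
  exact phiBN_le_one_s10 a hb n x

lemma phiBN_pair (a1 a2 : ℝ) {b1 b2 L : ℝ} (hb1 : 0 < b1) (hb2 : 0 < b2) (hL : 0 ≤ L)
    (hfg : ∀ t, phiB a1 b1 t ≤ phiB a2 b2 t)
    (hstep : ∀ t1 t2 : ℝ, t1 ≤ t2 → t2 ≤ t1 + L → phiB a2 b2 t2 ≤ phiB a1 b1 t1 + L) :
    ∀ n (x : ℕ → ℕ), phiBN a1 b1 n x ≤ phiBN a2 b2 n x ∧
      phiBN a2 b2 n x ≤ phiBN a1 b1 n x + L := by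
  intro n
  induction n with
  | zero => intro x; simp only [phiBN]; exact ⟨le_rfl, by linarith⟩
  | succ n ih =>
    intro x
    obtain ⟨h1, h2⟩ := ih (shft x)
    simp only [phiBN]
    constructor
    · calc phiB a1 b1 (↑(x 0) + phiBN a1 b1 n (shft x))
          ≤ phiB a2 b2 (↑(x 0) + phiBN a1 b1 n (shft x)) := hfg _
        _ ≤ phiB a2 b2 (↑(x 0) + phiBN a2 b2 n (shft x)) := phiB_mono_s10 a2 hb2 (by linarith)
    · exact hstep _ _ (by linarith) (by linarith)

lemma phiBInf_pair (a1 a2 : ℝ) {b1 b2 L : ℝ} (hb1 : 0 < b1) (hb2 : 0 < b2) (hL : 0 ≤ L)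
    (hfg : ∀ t, phiB a1 b1 t ≤ phiB a2 b2 t)
    (hstep : ∀ t1 t2 : ℝ, t1 ≤ t2 → t2 ≤ t1 + L → phiB a2 b2 t2 ≤ phiB a1 b1 t1 + L)
    (x : ℕ → ℕ) :
    phiBInf a1 b1 x ≤ phiBInf a2 b2 x ∧ phiBInf a2 b2 x ≤ phiBInf a1 b1 x + L := by
  constructor
  · simp only [phiBInf]
    apply ciSup_le
    intro n
    exact le_trans (phiBN_pair a1 a2 hb1 hb2 hL hfg hstep n x).1
      (le_ciSup (phiBN_bddAbove a2 hb2 x) n)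
  · simp only [phiBInf]
    apply ciSup_le
    intro n
    have h1 := (phiBN_pair a1 a2 hb1 hb2 hL hfg hstep n x).2
    have h2 := le_ciSup (phiBN_bddAbove a1 hb1 x) n
    linarith

lemma phiBN_anti (a : ℝ) {b b' : ℝ} (hb : 0 < b) (hbb : b ≤ b') :
    ∀ n x, phiBN a b' n x ≤ phiBN a b n x := by
  intro n
  induction n with
  | zero => intro x; simp [phiBN]
  | succ n ih =>
    intro x
    simp only [phiBN]
    calc phiB a b' (↑(x 0) + phiBN a b' n (shft x))
        ≤ phiB a b' (↑(x 0) + phiBN a b n (shft x)) :=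
          phiB_mono_s10 a (hb.trans_le hbb) (by linarith [ih (shft x)])
      _ ≤ phiB a b (↑(x 0) + phiBN a b n (shft x)) := phiB_anti a hb hbb _

lemma phiBN_lip_beta (a : ℝ) {b b' : ℝ} (hb : 1 ≤ b) (hbb : b ≤ b') :
    ∀ n x, phiBN a b n x ≤ phiBN a b' n x + n * (b' - b) := by
  have hb0 : (0:ℝ) < b := by linarith
  have hb'0 : (0:ℝ) < b' := by linarith
  have hb'1 : (1:ℝ) ≤ b' := by linarith
  intro n
  induction n with
  | zero => intro x; simp [phiBN]
  | succ n ih =>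
    intro x
    simp only [phiBN]
    have h1 := ih (shft x)
    have h2 := phiBN_anti a hb0 hbb n (shft x)
    have l5 := phiB_anti_lip a hb0 hbb (↑(x 0) + phiBN a b n (shft x))
    have lip := phiB_lip a hb'0
      (show (↑(x 0) : ℝ) + phiBN a b' n (shft x) ≤ ↑(x 0) + phiBN a b n (shft x) by linarith)
    have hd1 : (↑(x 0) + phiBN a b n (shft x) - (↑(x 0) + phiBN a b' n (shft x))) / b'
        ≤ (n * (b' - b)) / b' := by
      gcongr
      linarith
    have hd2 : (n * (b' - b)) / b' ≤ n * (b' - b) :=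
      div_le_self (mul_nonneg (Nat.cast_nonneg n) (by linarith)) hb'1
    have hd3 : (b' - b) / b' ≤ b' - b := div_le_self (by linarith) hb'1
    push_cast
    linarith

/-- **Lipschitz dependence of `φ̄_∞` on the parameters.** Let `k ≥ 2` and `x ∈ A^ℕ`.
(1) If `α ∈ [0,1]` and `1 ≤ β < β′`, then
`0 ≤ φ̄_∞^{α,β}(x) − φ̄_∞^{α,β′}(x) ≤ (β′−β)/(β′−1)`.
(2) If `0 ≤ α′ < α ≤ 1`, `β′ > 1` and `α+β−k+1 = α′+β′−k+1 ∈ [0,1]`, then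
`0 ≤ φ̄_∞^{α′,β′}(x) − φ̄_∞^{α,β}(x) ≤ (α−α′)/(β′−1)`.
(3) For fixed `α ∈ [0,1]`, the map `β ↦ φ̄_∞^{α,β}(x)` is continuous at `β = 1`
from the right. -/
theorem phiInf_lipschitz_in_parameters (k : ℕ) (hk : 2 ≤ k)
    (x : ℕ → ℕ) (hx : ∀ i, x i < k) :
    (∀ α β β' : ℝ, 0 ≤ α → α ≤ 1 → 1 ≤ β → β < β' →
      0 ≤ phiBInf α β x - phiBInf α β' x ∧
      phiBInf α β x - phiBInf α β' x ≤ (β' - β) / (β' - 1)) ∧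
    (∀ α α' β β' : ℝ, 0 ≤ α' → α' < α → α ≤ 1 → 1 < β' →
      α + β - k + 1 = α' + β' - k + 1 →
      α + β - k + 1 ∈ Set.Icc (0 : ℝ) 1 →
      0 ≤ phiBInf α' β' x - phiBInf α β x ∧
      phiBInf α' β' x - phiBInf α β x ≤ (α - α') / (β' - 1)) ∧
    (∀ α : ℝ, 0 ≤ α → α ≤ 1 →
      ContinuousWithinAt (fun β : ℝ => phiBInf α β x) (Set.Ici (1 : ℝ)) 1) := by
  refine ⟨?_, ?_, ?_⟩
  · -- Part (1)
    intro α β β' hα0 hα1 hβ hββ'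
    have hb : (0:ℝ) < β := by linarith
    have hb' : (0:ℝ) < β' := by linarith
    have hb'1 : (1:ℝ) < β' := by linarith
    have hL : 0 ≤ (β' - β) / (β' - 1) := div_nonneg (by linarith) (by linarith)
    have hfg : ∀ t, phiB α β' t ≤ phiB α β t := phiB_anti α hb hββ'.le
    have hstep : ∀ t1 t2 : ℝ, t1 ≤ t2 → t2 ≤ t1 + (β' - β) / (β' - 1) →
        phiB α β t2 ≤ phiB α β' t1 + (β' - β) / (β' - 1) := by
      intro t1 t2 h12 h2L
      have e1 := phiB_anti_lip α hb hββ'.le t2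
      have e2 := phiB_lip α hb' h12
      have e3 : (t2 - t1) / β' ≤ ((β' - β) / (β' - 1)) / β' := by gcongr; linarith
      have e4 : ((β' - β) / (β' - 1)) / β' + (β' - β) / β' = (β' - β) / (β' - 1) := by
        have hne1 : β' ≠ 0 := ne_of_gt hb'
        have hne2 : β' - 1 ≠ 0 := ne_of_gt (by linarith)
        field_simp
        ring
      linarith
    have hp := phiBInf_pair α α hb' hb hL hfg hstep x
    exact ⟨by linarith [hp.1], by linarith [hp.2]⟩
  · -- Part (2)
    intro α α' β β' h0 h1 h2 h3 heq _hIcc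
    have hsum : α + β = α' + β' := by linarith
    have hb' : (0:ℝ) < β' := by linarith
    have hb : (0:ℝ) < β := by linarith
    have hL : 0 ≤ (α - α') / (β' - 1) := div_nonneg (by linarith) (by linarith)
    have hfg : ∀ t, phiB α β t ≤ phiB α' β' t := phiB_shift_le h1.le hb hsum
    have hstep : ∀ t1 t2 : ℝ, t1 ≤ t2 → t2 ≤ t1 + (α - α') / (β' - 1) →
        phiB α' β' t2 ≤ phiB α β t1 + (α - α') / (β' - 1) := by
      intro t1 t2 h12 h2L
      have e1 := phiB_lip α' hb' h12
      have e2 := phiB_shift_ge h1.le hb hsum t1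
      have e3 : (t2 - t1) / β' ≤ ((α - α') / (β' - 1)) / β' := by gcongr; linarith
      have e4 : ((α - α') / (β' - 1)) / β' + (α - α') / β' = (α - α') / (β' - 1) := by
        have hne1 : β' ≠ 0 := ne_of_gt hb'
        have hne2 : β' - 1 ≠ 0 := ne_of_gt (by linarith)
        field_simp
        ring
      linarith
    have hp := phiBInf_pair α α' hb hb' hL hfg hstep x
    exact ⟨by linarith [hp.1], by linarith [hp.2]⟩
  · -- Part (3)
    intro α hα0 hα1
    rw [Metric.continuousWithinAt_iff]
    intro ε hε
    have hone : (0:ℝ) < 1 := one_pos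
    have hlt : phiBInf α 1 x - ε / 2 < ⨆ n, phiBN α 1 n x := by
      have : phiBInf α 1 x - ε / 2 < phiBInf α 1 x := by linarith
      simpa only [phiBInf] using this
    obtain ⟨n0, hn0⟩ := exists_lt_of_lt_ciSup hlt
    refine ⟨ε / (2 * (n0 + 1)), div_pos hε (by positivity), ?_⟩
    intro β hβ hdist
    have hβ1 : (1:ℝ) ≤ β := hβ
    have hβ0 : (0:ℝ) < β := by linarith
    rw [Real.dist_eq] at hdist ⊢
    have hd : β - 1 < ε / (2 * (n0 + 1)) := lt_of_le_of_lt (le_abs_self _) hdist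
    have hup : phiBInf α β x ≤ phiBInf α 1 x := by
      simp only [phiBInf]
      apply ciSup_le
      intro n
      exact le_trans (phiBN_anti α one_pos hβ1 n x) (le_ciSup (phiBN_bddAbove α one_pos x) n)
    have hlow := phiBN_lip_beta α le_rfl hβ1 n0 x
    have hle : phiBN α β n0 x ≤ phiBInf α β x := by
      simp only [phiBInf]
      exact le_ciSup (phiBN_bddAbove α hβ0 x) n0
    have hmul : (n0:ℝ) * (β - 1) ≤ (n0:ℝ) * (ε / (2 * (n0 + 1))) :=
      mul_le_mul_of_nonneg_left hd.le (Nat.cast_nonneg n0)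
    have hfrac : (n0:ℝ) * (ε / (2 * ((n0:ℝ) + 1))) < ε / 2 := by
      rw [mul_div_assoc', div_lt_div_iff₀ (by positivity) (by norm_num)]
      nlinarith [show (0:ℝ) ≤ (n0:ℝ) from Nat.cast_nonneg n0]
    rw [abs_lt]
    push_cast at hmul hlow
    constructor <;> linarith
end
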